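/- Suppose A ∩ B = ∅ in the setting of I = (u_1, u_2, x_1^{e_1},...,x_n^{e_n}), with p = |P_1| and s = |P_2| (so p + s = n). Then the number of M-critical vertices of cardinality i+1 equals the sum over triples (a,b,c) of nonnegative integers with a + b + c = i+1, a < p, b < s, c ≤ 2 of C(p,a)·C(s,b)·C(2,c), where C denotes the binomial coefficient. -/

import Mathlib

open Finset

def v1 {n : ℕ} : Fin 2 ⊕ Fin n := Sum.inl 0
def v2 {n : ℕ} : Fin 2 ⊕ Fin n := Sum.inl 1

/-- Generators of `I`: index `inl 0 ↦ u₁` (exponents `a`), `inl 1 ↦ u₂` (exponents `b`),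
`inr i ↦ x_i^{e_i}`; monomials modeled as exponent vectors. -/
def gen {n : ℕ} (a b e : Fin n → ℕ) : Fin 2 ⊕ Fin n → Fin n → ℕ :=
  Sum.elim (fun t => if t = 0 then a else b) (fun i j => if j = i then e i else 0)

/-- The lcm label `m_T` of a subset of generators (pointwise max of exponent vectors). -/
def mT {n : ℕ} (a b e : Fin n → ℕ) (T : Finset (Fin 2 ⊕ Fin n)) : Fin n → ℕ :=
  fun i => T.sup fun k => gen a b e k i

def P0 {n : ℕ} (a b : Fin n → ℕ) : Finset (Fin 2 ⊕ Fin n) :=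
  (Finset.univ.filter fun i => a i = b i).image Sum.inr

def P1 {n : ℕ} (a b : Fin n → ℕ) : Finset (Fin 2 ⊕ Fin n) :=
  (Finset.univ.filter fun i => b i < a i).image Sum.inr

def P2 {n : ℕ} (a b : Fin n → ℕ) : Finset (Fin 2 ⊕ Fin n) :=
  (Finset.univ.filter fun i => a i < b i).image Sum.inr

def setA {n : ℕ} (a : Fin n → ℕ) : Finset (Fin 2 ⊕ Fin n) :=
  (Finset.univ.filter fun i => 0 < a i).image Sum.inr

def setB {n : ℕ} (b : Fin n → ℕ) : Finset (Fin 2 ⊕ Fin n) :=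
  (Finset.univ.filter fun i => 0 < b i).image Sum.inr

/-- The matching `M` on the Hasse diagram of `2^[n+2]`: `MM a b T T'` means `(T,T')` is an
edge of the matching, given by the four families of the paper. -/
def MM {n : ℕ} (a b : Fin n → ℕ) (T T' : Finset (Fin 2 ⊕ Fin n)) : Prop :=
  (v1 ∈ T ∧ v2 ∈ T ∧ P1 a b ⊆ T ∧ T' = T.erase v1) ∨
  (v1 ∈ T ∧ v2 ∈ T ∧ ¬ P1 a b ⊆ T ∧ P2 a b ⊆ T ∧ T' = T.erase v2) ∨
  (v1 ∈ T ∧ v2 ∉ T ∧ setA a ⊆ T ∧ T' = T.erase v1) ∨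
  (v1 ∉ T ∧ v2 ∈ T ∧ setB b ⊆ T ∧ T ≠ Finset.univ.erase v1 ∧ T' = T.erase v2)

/-- `T` is an `M`-critical vertex: it is incident to no edge of the matching. -/
def critical {n : ℕ} (a b : Fin n → ℕ) (T : Finset (Fin 2 ⊕ Fin n)) : Prop :=
  ∀ T', ¬ MM a b T T' ∧ ¬ MM a b T' T

/-! ### Auxiliary material -/

def Vt (n : ℕ) : Finset (Fin 2 ⊕ Fin n) := {v1, v2}

section
variable {n : ℕ} {a b : Fin n → ℕ}

lemma v1_ne_v2 : (v1 : Fin 2 ⊕ Fin n) ≠ v2 := by simp [v1, v2]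

lemma mem_P1_iff {i : Fin n} : Sum.inr i ∈ P1 a b ↔ b i < a i := by simp [P1]
lemma mem_P2_iff {i : Fin n} : Sum.inr i ∈ P2 a b ↔ a i < b i := by simp [P2]

lemma inl_not_mem_P1 {k : Fin 2 ⊕ Fin n} (h : k ∈ P1 a b) : ∀ j : Fin 2, k ≠ Sum.inl j := by
  simp only [P1, mem_image, mem_filter] at h
  obtain ⟨i, -, rfl⟩ := h; intro j h'; exact nomatch h'

lemma inl_not_mem_P2 {k : Fin 2 ⊕ Fin n} (h : k ∈ P2 a b) : ∀ j : Fin 2, k ≠ Sum.inl j := by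
  simp only [P2, mem_image, mem_filter] at h
  obtain ⟨i, -, rfl⟩ := h; intro j h'; exact nomatch h'

lemma Vt_card : (Vt n).card = 2 := by
  rw [Vt, card_insert_of_notMem (by simp [v1, v2]), card_singleton]

lemma mem_Vt {k : Fin 2 ⊕ Fin n} : k ∈ Vt n ↔ k = v1 ∨ k = v2 := by simp [Vt]

/-- Criticality characterization, assuming `setA = P1`, `setB = P2`. -/
lemma crit_iff (hA1 : setA a = P1 a b) (hB2 : setB b = P2 a b)
    (T : Finset (Fin 2 ⊕ Fin n)) :
    critical a b T ↔ ¬ P1 a b ⊆ T ∧ ¬ P2 a b ⊆ T := by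
  constructor
  · intro hcrit
    constructor
    · intro hsub
      by_cases hv1 : v1 ∈ T
      · by_cases hv2 : v2 ∈ T
        · exact (hcrit (T.erase v1)).1 (Or.inl ⟨hv1, hv2, hsub, rfl⟩)
        · exact (hcrit (T.erase v1)).1
            (Or.inr (Or.inr (Or.inl ⟨hv1, hv2, hA1 ▸ hsub, rfl⟩)))
      · have hP1' : P1 a b ⊆ insert v1 T := hsub.trans (subset_insert _ _)
        have herase : (insert v1 T).erase v1 = T := erase_insert hv1
        by_cases hv2 : v2 ∈ T
        · exact (hcrit (insert v1 T)).2
            (Or.inl ⟨mem_insert_self _ _, mem_insert_of_mem hv2, hP1', herase.symm⟩)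
        · have hv2' : v2 ∉ insert v1 T := by
            simp [mem_insert, hv2, (Ne.symm v1_ne_v2)]
          exact (hcrit (insert v1 T)).2
            (Or.inr (Or.inr (Or.inl ⟨mem_insert_self _ _, hv2', hA1 ▸ hP1', herase.symm⟩)))
    · intro hsub
      by_cases hv1 : v1 ∈ T
      · by_cases hv2 : v2 ∈ T
        · by_cases hP1 : P1 a b ⊆ T
          · exact (hcrit (T.erase v1)).1 (Or.inl ⟨hv1, hv2, hP1, rfl⟩)
          · exact (hcrit (T.erase v2)).1 (Or.inr (Or.inl ⟨hv1, hv2, hP1, hsub, rfl⟩))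
        · by_cases hP1 : P1 a b ⊆ T
          · exact (hcrit (T.erase v1)).1
              (Or.inr (Or.inr (Or.inl ⟨hv1, hv2, hA1 ▸ hP1, rfl⟩)))
          · have herase : (insert v2 T).erase v2 = T := erase_insert hv2
            have hnP1 : ¬ P1 a b ⊆ insert v2 T := by
              intro h; apply hP1; intro k hk
              rcases mem_insert.1 (h hk) with h' | h'
              · exact absurd h' (inl_not_mem_P1 hk 1)
              · exact h'
            exact (hcrit (insert v2 T)).2
              (Or.inr (Or.inl ⟨mem_insert_of_mem hv1, mem_insert_self _ _, hnP1,
                hsub.trans (subset_insert _ _), herase.symm⟩))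
      · by_cases hv2 : v2 ∈ T
        · by_cases hT : T = Finset.univ.erase v1
          · have hP1 : P1 a b ⊆ T := by
              intro k hk
              rw [hT]; exact mem_erase.2 ⟨inl_not_mem_P1 hk 0, mem_univ _⟩
            have herase : (insert v1 T).erase v1 = T := erase_insert hv1
            exact (hcrit (insert v1 T)).2
              (Or.inl ⟨mem_insert_self _ _, mem_insert_of_mem hv2,
                hP1.trans (subset_insert _ _), herase.symm⟩)
          · exact (hcrit (T.erase v2)).1
              (Or.inr (Or.inr (Or.inr ⟨hv1, hv2, hB2 ▸ hsub, hT, rfl⟩)))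
        · have herase : (insert v2 T).erase v2 = T := erase_insert hv2
          by_cases hT' : insert v2 T = Finset.univ.erase v1
          · have hP1 : P1 a b ⊆ T := by
              intro k hk
              have hk' : k ∈ insert v2 T := by
                rw [hT']; exact mem_erase.2 ⟨inl_not_mem_P1 hk 0, mem_univ _⟩
              rcases mem_insert.1 hk' with h' | h'
              · exact absurd h' (inl_not_mem_P1 hk 1)
              · exact h'
            have herase1 : (insert v1 T).erase v1 = T := erase_insert hv1
            have hv2' : v2 ∉ insert v1 T := by
              simp [mem_insert, hv2, (Ne.symm v1_ne_v2)]
            exact (hcrit (insert v1 T)).2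
              (Or.inr (Or.inr (Or.inl ⟨mem_insert_self _ _, hv2',
                hA1 ▸ hP1.trans (subset_insert _ _), herase1.symm⟩)))
          · have hv1' : v1 ∉ insert v2 T := by
              simp [mem_insert, hv1, v1_ne_v2]
            exact (hcrit (insert v2 T)).2
              (Or.inr (Or.inr (Or.inr ⟨hv1', mem_insert_self _ _,
                hB2 ▸ hsub.trans (subset_insert _ _), hT', herase.symm⟩)))
  · rintro ⟨h1, h2⟩ T'
    constructor
    · rintro (⟨-, -, hP1, -⟩ | ⟨-, -, -, hP2, -⟩ | ⟨-, -, hA, -⟩ | ⟨-, -, hB, -, -⟩)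
      · exact h1 hP1
      · exact h2 hP2
      · exact h1 (hA1 ▸ hA)
      · exact h2 (hB2 ▸ hB)
    · rintro (⟨-, -, hP1, hT⟩ | ⟨-, -, -, hP2, hT⟩ | ⟨-, -, hA, hT⟩ | ⟨-, -, hB, -, hT⟩)
      · exact h1 fun k hk => hT ▸ mem_erase.2 ⟨inl_not_mem_P1 hk 0, hP1 hk⟩
      · exact h2 fun k hk => hT ▸ mem_erase.2 ⟨inl_not_mem_P2 hk 1, hP2 hk⟩
      · exact h1 fun k hk => hT ▸ mem_erase.2 ⟨inl_not_mem_P1 hk 0, (hA1 ▸ hA : P1 a b ⊆ _) hk⟩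
      · exact h2 fun k hk => hT ▸ mem_erase.2 ⟨inl_not_mem_P2 hk 1, (hB2 ▸ hB : P2 a b ⊆ _) hk⟩

end

/-- Betti numbers when `A ∩ B = ∅`, with `p = |P₁|`, `s = |P₂|`: the number
of `M`-critical vertices of cardinality `i+1` equals
`∑_{x+y+z=i+1, x<p, y<s, z≤2} C(p,x)·C(s,y)·C(2,z)`. -/
theorem stmt15 (n : ℕ) (a b e : Fin n → ℕ) (hab : ∀ i, 0 < a i + b i)
    (he : ∀ i, max (a i) (b i) < e i)
    (hAB : setA a ∩ setB b = ∅)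
    (p s : ℕ) (hp : (P1 a b).card = p) (hs : (P2 a b).card = s) (i : ℕ) :
    {T : Finset (Fin 2 ⊕ Fin n) | critical a b T ∧ T.card = i + 1}.ncard =
      ∑ x ∈ Finset.range (i + 2), ∑ y ∈ Finset.range (i + 2),
        ∑ z ∈ Finset.range (i + 2),
          if x + y + z = i + 1 ∧ x < p ∧ y < s ∧ z ≤ 2 then
            p.choose x * s.choose y * Nat.choose 2 z
          else 0 := by
  classical
  -- pointwise consequences of `A ∩ B = ∅`
  have hpt : ∀ j, a j = 0 ∨ b j = 0 := by
    intro j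
    by_contra h
    push_neg at h
    have : Sum.inr j ∈ setA a ∩ setB b := by
      simp [setA, setB, Nat.pos_of_ne_zero h.1, Nat.pos_of_ne_zero h.2]
    rw [hAB] at this
    exact absurd this (Finset.notMem_empty _)
  have hA1 : setA a = P1 a b := by
    unfold setA P1; congr 1
    ext j; simp only [mem_filter, mem_univ, true_and]
    have := hpt j; omega
  have hB2 : setB b = P2 a b := by
    unfold setB P2; congr 1
    ext j; simp only [mem_filter, mem_univ, true_and]
    have := hpt j; omega
  -- coverage of the universe
  have hcov : ∀ k : Fin 2 ⊕ Fin n, k ∈ Vt n ∨ k ∈ P1 a b ∨ k ∈ P2 a b := by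
    intro k
    rcases k with j | j
    · left
      rw [mem_Vt]
      have : j = 0 ∨ j = 1 := by omega
      rcases this with h | h <;> simp [h, v1, v2]
    · have h1 := hab j
      have h2 := hpt j
      rcases h2 with h | h
      · exact Or.inr (Or.inr (mem_P2_iff.2 (by omega)))
      · exact Or.inr (Or.inl (mem_P1_iff.2 (by omega)))
  -- disjointness
  have hd12 : Disjoint (P1 a b) (P2 a b) := by
    rw [Finset.disjoint_left]
    intro k h1 h2
    simp only [P1, P2, mem_image, mem_filter] at h1 h2
    obtain ⟨j, hj, rfl⟩ := h1
    obtain ⟨j', hj', hj'e⟩ := h2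
    obtain rfl : j' = j := Sum.inr.inj hj'e
    omega
  have hdV1 : Disjoint (Vt n) (P1 a b) := by
    rw [Finset.disjoint_left]
    intro k hk hk'
    rcases mem_Vt.1 hk with rfl | rfl
    · exact inl_not_mem_P1 hk' 0 rfl
    · exact inl_not_mem_P1 hk' 1 rfl
  have hdV2 : Disjoint (Vt n) (P2 a b) := by
    rw [Finset.disjoint_left]
    intro k hk hk'
    rcases mem_Vt.1 hk with rfl | rfl
    · exact inl_not_mem_P2 hk' 0 rfl
    · exact inl_not_mem_P2 hk' 1 rfl
  -- rewrite the set as a finset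
  have hset : {T : Finset (Fin 2 ⊕ Fin n) | critical a b T ∧ T.card = i + 1} =
      ↑(Finset.univ.filter fun T : Finset (Fin 2 ⊕ Fin n) =>
        (¬ P1 a b ⊆ T ∧ ¬ P2 a b ⊆ T) ∧ T.card = i + 1) := by
    ext T
    simp only [Set.mem_setOf_eq, coe_filter, mem_univ, true_and, crit_iff hA1 hB2]
  rw [hset, Set.ncard_coe_finset]
  -- the bijection with triples
  set S : Finset (Finset (Fin 2 ⊕ Fin n) × Finset (Fin 2 ⊕ Fin n) × Finset (Fin 2 ⊕ Fin n)) :=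
    ((P1 a b).powerset ×ˢ (P2 a b).powerset ×ˢ (Vt n).powerset).filter
      (fun q => q.1 ≠ P1 a b ∧ q.2.1 ≠ P2 a b ∧ q.1.card + q.2.1.card + q.2.2.card = i + 1)
    with hS
  have hdecomp : ∀ T : Finset (Fin 2 ⊕ Fin n),
      (T ∩ P1 a b) ∪ ((T ∩ P2 a b) ∪ (T ∩ Vt n)) = T := by
    intro T
    ext k
    simp only [mem_union, mem_inter]
    constructor
    · tauto
    · intro hk
      rcases hcov k with h | h | h <;> tauto
  have hsplit : ∀ X Y C : Finset (Fin 2 ⊕ Fin n), X ⊆ P1 a b → Y ⊆ P2 a b → C ⊆ Vt n →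
      (X ∪ (Y ∪ C)) ∩ P1 a b = X ∧ (X ∪ (Y ∪ C)) ∩ P2 a b = Y ∧
      (X ∪ (Y ∪ C)) ∩ Vt n = C := by
    intro X Y C hX hY hC
    refine ⟨?_, ?_, ?_⟩
    · ext k
      simp only [mem_inter, mem_union]
      constructor
      · rintro ⟨(h | h | h), h2⟩
        · exact h
        · exact absurd (hY h) (Finset.disjoint_left.1 hd12 h2)
        · exact absurd (hC h) (Finset.disjoint_right.1 hdV1 h2)
      · intro h
        exact ⟨Or.inl h, hX h⟩
    · ext k
      simp only [mem_inter, mem_union]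
      constructor
      · rintro ⟨(h | h | h), h2⟩
        · exact absurd h2 (Finset.disjoint_left.1 hd12 (hX h))
        · exact h
        · exact absurd (hC h) (Finset.disjoint_right.1 hdV2 h2)
      · intro h
        exact ⟨Or.inr (Or.inl h), hY h⟩
    · ext k
      simp only [mem_inter, mem_union]
      constructor
      · rintro ⟨(h | h | h), h2⟩
        · exact absurd (hX h) (Finset.disjoint_left.1 hdV1 h2)
        · exact absurd (hY h) (Finset.disjoint_left.1 hdV2 h2)
        · exact h
      · intro h
        exact ⟨Or.inr (Or.inr h), hC h⟩
  have hcardsum : ∀ T : Finset (Fin 2 ⊕ Fin n),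
      (T ∩ P1 a b).card + (T ∩ P2 a b).card + (T ∩ Vt n).card = T.card := by
    intro T
    have d1 : Disjoint (T ∩ P1 a b) ((T ∩ P2 a b) ∪ (T ∩ Vt n)) := by
      rw [Finset.disjoint_union_right]
      exact ⟨hd12.mono inter_subset_right inter_subset_right,
        (hdV1.symm).mono inter_subset_right inter_subset_right⟩
    have d2 : Disjoint (T ∩ P2 a b) (T ∩ Vt n) :=
      (hdV2.symm).mono inter_subset_right inter_subset_right
    calc (T ∩ P1 a b).card + (T ∩ P2 a b).card + (T ∩ Vt n).card
        = (T ∩ P1 a b).card + ((T ∩ P2 a b) ∪ (T ∩ Vt n)).card := by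
          rw [card_union_of_disjoint d2]; ring
      _ = ((T ∩ P1 a b) ∪ ((T ∩ P2 a b) ∪ (T ∩ Vt n))).card := (card_union_of_disjoint d1).symm
      _ = T.card := by rw [hdecomp]
  have hbij : (Finset.univ.filter fun T : Finset (Fin 2 ⊕ Fin n) =>
      (¬ P1 a b ⊆ T ∧ ¬ P2 a b ⊆ T) ∧ T.card = i + 1).card = S.card := by
    apply Finset.card_nbij' (fun T => (T ∩ P1 a b, T ∩ P2 a b, T ∩ Vt n))
      (fun q => q.1 ∪ (q.2.1 ∪ q.2.2))
    · intro T hT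
      simp only [mem_coe, mem_filter, mem_univ, true_and] at hT
      obtain ⟨⟨h1, h2⟩, h3⟩ := hT
      rw [hS, mem_coe, mem_filter, mem_product, mem_product]
      refine ⟨⟨mem_powerset.2 inter_subset_right, mem_powerset.2 inter_subset_right,
        mem_powerset.2 inter_subset_right⟩, ?_, ?_, ?_⟩
      · intro h; exact h1 (by rw [← h]; exact inter_subset_left)
      · intro h; exact h2 (by rw [← h]; exact inter_subset_left)
      · rw [hcardsum, h3]
    · intro q hq
      rw [hS, mem_coe, mem_filter, mem_product, mem_product] at hq
      obtain ⟨⟨hX, hY, hC⟩, hne1, hne2, hcard⟩ := hq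
      rw [mem_powerset] at hX hY hC
      obtain ⟨e1, e2, e3⟩ := hsplit q.1 q.2.1 q.2.2 hX hY hC
      simp only [mem_coe, mem_filter, mem_univ, true_and]
      refine ⟨⟨?_, ?_⟩, ?_⟩
      · intro h
        exact hne1 (le_antisymm hX (by rw [← e1]; exact fun k hk => mem_inter.2 ⟨h hk, hk⟩))
      · intro h
        exact hne2 (le_antisymm hY (by rw [← e2]; exact fun k hk => mem_inter.2 ⟨h hk, hk⟩))
      · rw [← hcard, ← hcardsum (q.1 ∪ (q.2.1 ∪ q.2.2)), e1, e2, e3]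
    · intro T hT
      exact hdecomp T
    · intro q hq
      rw [hS, mem_coe, mem_filter, mem_product, mem_product] at hq
      obtain ⟨⟨hX, hY, hC⟩, -⟩ := hq
      rw [mem_powerset] at hX hY hC
      obtain ⟨e1, e2, e3⟩ := hsplit q.1 q.2.1 q.2.2 hX hY hC
      beta_reduce
      rw [e1, e2, e3]
  rw [hbij]
  -- fiberwise counting
  have hfib : S.card = ∑ w ∈ (Finset.range (i + 2)) ×ˢ ((Finset.range (i + 2)) ×ˢ (Finset.range (i + 2))),
      (S.filter fun q => (q.1.card, q.2.1.card, q.2.2.card) = w).card := by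
    apply Finset.card_eq_sum_card_fiberwise
    intro q hq
    rw [hS, mem_coe, mem_filter] at hq
    obtain ⟨-, -, -, hcard⟩ := hq
    simp only [mem_coe, mem_product, mem_range]
    omega
  rw [hfib, Finset.sum_product]
  refine Finset.sum_congr rfl fun x hx => ?_
  rw [Finset.sum_product]
  refine Finset.sum_congr rfl fun y hy => Finset.sum_congr rfl fun z hz => ?_
  by_cases hcond : x + y + z = i + 1 ∧ x < p ∧ y < s ∧ z ≤ 2
  · rw [if_pos hcond]
    obtain ⟨hsum, hxp, hys, hz2⟩ := hcond
    have : S.filter (fun q => (q.1.card, q.2.1.card, q.2.2.card) = (x, y, z)) =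
        (P1 a b).powersetCard x ×ˢ ((P2 a b).powersetCard y ×ˢ (Vt n).powersetCard z) := by
      ext q
      rw [hS, mem_filter, mem_filter, mem_product, mem_product, mem_product, mem_product,
        mem_powersetCard, mem_powersetCard, mem_powersetCard]
      simp only [mem_powerset, Prod.mk.injEq]
      constructor
      · rintro ⟨⟨⟨hX, hY, hC⟩, -, -, -⟩, hcx, hcy, hcz⟩
        exact ⟨⟨hX, hcx⟩, ⟨hY, hcy⟩, ⟨hC, hcz⟩⟩
      · rintro ⟨⟨hX, hcx⟩, ⟨hY, hcy⟩, ⟨hC, hcz⟩⟩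
        refine ⟨⟨⟨hX, hY, hC⟩, ?_, ?_, by omega⟩, hcx, hcy, hcz⟩
        · intro h; rw [h, hp] at hcx; omega
        · intro h; rw [h, hs] at hcy; omega
    rw [this, card_product, card_product, card_powersetCard, card_powersetCard,
      card_powersetCard, hp, hs, Vt_card, Nat.mul_assoc]
  · rw [if_neg hcond]
    rw [Finset.card_eq_zero, Finset.eq_empty_iff_forall_notMem]
    intro q hq
    rw [mem_filter, hS, mem_filter, mem_product, mem_product] at hq
    obtain ⟨⟨⟨hX, hY, hC⟩, hne1, hne2, hcard⟩, heq⟩ := hq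
    rw [mem_powerset] at hX hY hC
    simp only [Prod.mk.injEq] at heq
    obtain ⟨hcx, hcy, hcz⟩ := heq
    apply hcond
    have hxle : q.1.card ≤ p := by rw [← hp]; exact card_le_card hX
    have hyle : q.2.1.card ≤ s := by rw [← hs]; exact card_le_card hY
    have hzle : q.2.2.card ≤ 2 := le_trans (card_le_card hC) (le_of_eq Vt_card)
    have hxlt : q.1.card < p := by
      rcases lt_or_eq_of_le hxle with h | h
      · exact h
      · exact absurd (Finset.eq_of_subset_of_card_le hX (by omega)) hne1
    have hylt : q.2.1.card < s := by
      rcases lt_or_eq_of_le hyle with h | h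
      · exact h
      · exact absurd (Finset.eq_of_subset_of_card_le hY (by omega)) hne2
    omega
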